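/- For n ≥ 7, there exists an acyclic orientation of the square of the cycle C_n with exactly ⌈n/2⌉ + 1 dependent arcs. -/

import Mathlib

open SimpleGraph

variable {V : Type*}

/-- An orientation of a simple graph: each edge gets exactly one direction. -/
structure GraphOrientation {V : Type*} (G : SimpleGraph V) where
  rel : V → V → Prop
  sub : ∀ ⦃u v⦄, rel u v → G.Adj u v
  cover : ∀ ⦃u v⦄, G.Adj u v → rel u v ∨ rel v u
  asymm : ∀ ⦃u v⦄, rel u v → ¬ rel v u

/-- An orientation is acyclic if it has no directed cycle. -/
def GraphOrientation.Acyclic {G : SimpleGraph V} (D : GraphOrientation G) : Prop :=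
  ∀ v, ¬ Relation.TransGen D.rel v v

/-- An arc `u → v` of an acyclic orientation is dependent iff its reversal creates a
directed cycle, equivalently there is another directed path from `u` to `v`. -/
def GraphOrientation.Dep {G : SimpleGraph V} (D : GraphOrientation G) (u v : V) : Prop :=
  D.rel u v ∧ Relation.TransGen (fun a b => D.rel a b ∧ ¬(a = u ∧ b = v)) u v

/-- The set of dependent arcs of an orientation. -/
def GraphOrientation.depArcs {G : SimpleGraph V} (D : GraphOrientation G) : Set (V × V) :=
  {p | D.Dep p.1 p.2}

/-- The number of dependent arcs. -/
noncomputable def depCount {G : SimpleGraph V} (D : GraphOrientation G) : ℕ :=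
  D.depArcs.ncard

/-- Minimum number of dependent arcs over all acyclic orientations. -/
noncomputable def dmin (G : SimpleGraph V) : ℕ :=
  sInf {k | ∃ D : GraphOrientation G, D.Acyclic ∧ depCount D = k}

/-- Maximum number of dependent arcs over all acyclic orientations. -/
noncomputable def dmax (G : SimpleGraph V) : ℕ :=
  sSup {k | ∃ D : GraphOrientation G, D.Acyclic ∧ depCount D = k}

/-- Minimum number of edges whose deletion makes `G` triangle-free. -/
noncomputable def piT (G : SimpleGraph V) : ℕ :=
  sInf {k | ∃ S : Set (Sym2 V), S ⊆ G.edgeSet ∧ S.ncard = k ∧ (G.deleteEdges S).CliqueFree 3}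

/-- The square of the cycle `C_n` on vertices `ZMod n`. -/
def cycleSq (n : ℕ) : SimpleGraph (ZMod n) where
  Adj u v := u ≠ v ∧ (u - v = 1 ∨ v - u = 1 ∨ u - v = 2 ∨ v - u = 2)
  symm := ⟨by intro u v h; exact ⟨h.1.symm, by tauto⟩⟩
  loopless := ⟨by intro u h; exact h.1 rfl⟩

namespace CSq

/-- rank function (for acyclicity) -/
def rkA (n a : ℕ) : ℕ :=
  if a = 0 then 0
  else if a = 1 then 2
  else if n % 2 = 1 ∧ a = n - 1 then 2 * n
  else if a % 2 = 0 then n + 2 - a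
  else 2 * n + 1 - a

set_option maxHeartbeats 1000000 in
lemma rkA_cases (n a : ℕ) :
    (a = 0 ∧ rkA n a = 0) ∨
    (a = 1 ∧ rkA n a = 2) ∨
    (2 ≤ a ∧ n % 2 = 1 ∧ a + 1 = n ∧ rkA n a = 2 * n) ∨
    (2 ≤ a ∧ ¬(n % 2 = 1 ∧ a + 1 = n) ∧ a % 2 = 0 ∧ rkA n a = n + 2 - a) ∨
    (2 ≤ a ∧ ¬(n % 2 = 1 ∧ a + 1 = n) ∧ a % 2 = 1 ∧ rkA n a = 2 * n + 1 - a) := by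
  unfold rkA; split_ifs <;> omega

/-- linear description of adjacency on values -/
def NearA (n a b : ℕ) : Prop :=
  b = a + 1 ∨ a = b + 1 ∨ b = a + 2 ∨ a = b + 2 ∨
  (a = 0 ∧ n ≤ b + 2) ∨ (b = 0 ∧ n ≤ a + 2) ∨ (a = 1 ∧ b + 1 = n) ∨ (b = 1 ∧ a + 1 = n)

/-- the orientation: out-neighbour description -/
def ACA (n c b : ℕ) : Prop :=
  if c = 0 then b = 1 ∨ b = 2 ∨ b + 2 = n ∨ b + 1 = n
  else if c = 1 then b = 2 ∨ b = 3 ∨ b + 1 = n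
  else if c % 2 = 0 then
    c + 2 ≤ n ∧ ((b + 2 = c ∧ 2 ≤ b) ∨ (b + 1 = c ∧ 3 ≤ b) ∨ b = c + 1 ∨
      (n % 2 = 1 ∧ c + 3 = n ∧ b + 1 = n))
  else (b + 2 = c ∧ 3 ≤ b) ∨ (n % 2 = 1 ∧ c + 2 = n ∧ b + 1 = n)

/-- reachability over-approximation -/
def RRA (n a b : ℕ) : Prop :=
  if a = 0 then 0 < b
  else if a = 1 then
    if n % 2 = 0 then b = 2 ∨ (b % 2 = 1 ∧ 3 ≤ b ∧ b < n)
    else b = 2 ∨ b = 3 ∨ b + 1 = n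
  else if a % 2 = 0 then
    2 ≤ a ∧ a + 2 ≤ n ∧ ((b % 2 = 0 ∧ 2 ≤ b ∧ b < a) ∨ (b % 2 = 1 ∧ 3 ≤ b ∧ b ≤ a + 1) ∨
      (n % 2 = 1 ∧ a + 3 = n ∧ b + 1 = n))
  else 3 ≤ a ∧ a < n ∧ ((b % 2 = 1 ∧ 3 ≤ b ∧ b < a) ∨ (n % 2 = 1 ∧ a + 2 = n ∧ b + 1 = n))

/-- the set of dependent arcs, on values -/
def SSA (n a b : ℕ) : Prop :=
  if a = 0 then b = 2 ∨ b + 1 = n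
  else if a = 1 then b = 3
  else if a % 2 = 0 then (4 ≤ a ∧ a + 2 ≤ n ∧ b + 1 = a) ∨ (n % 2 = 1 ∧ a + 3 = n ∧ b + 1 = n)
  else False

lemma AC_bounds {n c b : ℕ} (hn : 7 ≤ n) (hc : c < n) (h : ACA n c b) : b < n ∧ c ≠ b := by
  unfold ACA at h; split_ifs at h <;> omega

lemma AC_near {n c b : ℕ} (hn : 7 ≤ n) (hc : c < n) (h : ACA n c b) : NearA n c b := by
  unfold ACA at h; unfold NearA; split_ifs at h <;> omega

set_option maxHeartbeats 1600000 in
lemma near_cover {n a b : ℕ} (hn : 7 ≤ n) (ha : a < n) (hb : b < n) (hne : a ≠ b)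
    (h8 : NearA n a b) : ACA n a b ∨ ACA n b a := by
  unfold NearA at h8
  unfold ACA
  split_ifs <;> omega

lemma AC_asymm {n a b : ℕ} (hn : 7 ≤ n) (ha : a < n) (hb : b < n)
    (h : ACA n a b) (h' : ACA n b a) : False := by
  unfold ACA at h h'
  split_ifs at h h' <;> omega

lemma AC_rk {n a b : ℕ} (hn : 7 ≤ n) (ha : a < n) (hb : b < n) (h : ACA n a b) :
    rkA n a < rkA n b := by
  have c1 := rkA_cases n a
  have c2 := rkA_cases n b
  unfold ACA at h
  split_ifs at h <;> omega

lemma AC_to_RR {n a b : ℕ} (hn : 7 ≤ n) (ha : a < n) (hb : b < n) (h : ACA n a b) :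
    RRA n a b := by
  unfold ACA at h
  unfold RRA
  split_ifs at h ⊢ <;> omega

set_option maxHeartbeats 1600000 in
lemma RR_step {n a c b : ℕ} (hn : 7 ≤ n) (ha : a < n) (hc : c < n) (hb : b < n)
    (hR : RRA n a c) (hAC : ACA n c b) : RRA n a b := by
  unfold ACA at hAC
  unfold RRA at hR ⊢
  split_ifs at hR hAC ⊢ <;> omega

set_option maxHeartbeats 1600000 in
lemma dep_lin {n a b w : ℕ} (hn : 7 ≤ n) (ha : a < n) (hb : b < n) (hw : w < n)
    (hwb : w ≠ b) (hab : ACA n a b) (haw : ACA n a w) (hR : RRA n w b) : SSA n a b := by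
  unfold ACA at hab haw
  unfold RRA at hR
  unfold SSA
  split_ifs at hab haw hR ⊢ <;> omega


lemma sub_eq_cast_iff {n : ℕ} (hn : 7 ≤ n) {u v : ZMod n} {k : ℕ} (hk : k < n) :
    u - v = (k : ZMod n) ↔ u.val = (v.val + k) % n := by
  haveI : NeZero n := ⟨by omega⟩
  rw [sub_eq_iff_eq_add]
  constructor
  · rintro rfl
    rw [ZMod.val_add, ZMod.val_cast_of_lt hk]
    ring_nf
  · intro h
    apply ZMod.val_injective
    rw [ZMod.val_add, ZMod.val_cast_of_lt hk, h, Nat.add_comm]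

lemma mod_small {x n : ℕ} (h : x < 2 * n) :
    x % n = if x < n then x else x - n := by
  split_ifs with h'
  · exact Nat.mod_eq_of_lt h'
  · rw [Nat.mod_eq_sub_mod (le_of_not_gt h'), Nat.mod_eq_of_lt (by omega)]

lemma adj_iff' {n : ℕ} (hn : 7 ≤ n) (u v : ZMod n) :
    (cycleSq n).Adj u v ↔ (u.val ≠ v.val ∧ NearA n u.val v.val) := by
  haveI : NeZero n := ⟨by omega⟩
  have hu := ZMod.val_lt u
  have hv := ZMod.val_lt v
  have hAdj : (cycleSq n).Adj u v ↔
      (u ≠ v ∧ (u - v = 1 ∨ v - u = 1 ∨ u - v = 2 ∨ v - u = 2)) := Iff.rfl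
  have h1 : (1 : ZMod n) = ((1 : ℕ) : ZMod n) := by norm_cast
  have h2 : (2 : ZMod n) = ((2 : ℕ) : ZMod n) := by norm_cast
  rw [hAdj, h1, h2, sub_eq_cast_iff hn (by omega), sub_eq_cast_iff hn (by omega),
    sub_eq_cast_iff hn (by omega), sub_eq_cast_iff hn (by omega),
    ne_eq, ← (ZMod.val_injective n).eq_iff,
    mod_small (by omega), mod_small (by omega), mod_small (by omega), mod_small (by omega)]
  unfold NearA
  split_ifs <;> omega

def myrel (n : ℕ) (u v : ZMod n) : Prop := (cycleSq n).Adj u v ∧ ACA n u.val v.val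

def orient (n : ℕ) (hn : 7 ≤ n) : GraphOrientation (cycleSq n) where
  rel := myrel n
  sub := fun _ _ h => h.1
  cover := fun u v h => by
    haveI : NeZero n := ⟨by omega⟩
    obtain ⟨hne, h8⟩ := (adj_iff' hn u v).mp h
    rcases near_cover hn (ZMod.val_lt u) (ZMod.val_lt v) hne h8 with hh | hh
    · exact Or.inl ⟨h, hh⟩
    · exact Or.inr ⟨h.symm, hh⟩
  asymm := fun u v h h' => by
    haveI : NeZero n := ⟨by omega⟩
    exact AC_asymm hn (ZMod.val_lt u) (ZMod.val_lt v) h.2 h'.2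

lemma rk_of_trans {n : ℕ} (hn : 7 ≤ n) {u v : ZMod n}
    (h : Relation.TransGen (myrel n) u v) : rkA n u.val < rkA n v.val := by
  haveI : NeZero n := ⟨by omega⟩
  induction h with
  | single h' => exact AC_rk hn (ZMod.val_lt _) (ZMod.val_lt _) h'.2
  | tail _ h' ih => exact ih.trans (AC_rk hn (ZMod.val_lt _) (ZMod.val_lt _) h'.2)

lemma reach {n : ℕ} (hn : 7 ≤ n) {u v : ZMod n}
    (h : Relation.TransGen (myrel n) u v) : RRA n u.val v.val := by
  haveI : NeZero n := ⟨by omega⟩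
  induction h with
  | single h' => exact AC_to_RR hn (ZMod.val_lt _) (ZMod.val_lt _) h'.2
  | tail _ h' ih => exact RR_step hn (ZMod.val_lt _) (ZMod.val_lt _) (ZMod.val_lt _) ih h'.2

lemma orient_acyclic {n : ℕ} (hn : 7 ≤ n) : (orient n hn).Acyclic :=
  fun _ h => absurd (rk_of_trans hn h) (lt_irrefl _)

lemma dep_to_S {n : ℕ} (hn : 7 ≤ n) {u v : ZMod n} (h : (orient n hn).Dep u v) :
    SSA n u.val v.val := by
  haveI : NeZero n := ⟨by omega⟩
  obtain ⟨hrel, hp⟩ := h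
  rw [Relation.TransGen.head'_iff] at hp
  obtain ⟨w, hw, hwv⟩ := hp
  have hwne : w ≠ v := by rintro rfl; exact hw.2 ⟨rfl, rfl⟩
  rcases Relation.reflTransGen_iff_eq_or_transGen.mp hwv with he | htg
  · exact absurd he.symm hwne
  · have hR : RRA n w.val v.val := reach hn (Relation.TransGen.mono (p := myrel n) (fun a b hab => hab.1) w v htg)
    have hvw : w.val ≠ v.val := fun e => hwne (ZMod.val_injective n e)
    exact dep_lin hn (ZMod.val_lt u) (ZMod.val_lt v) (ZMod.val_lt w) hvw hrel.2 hw.1.2 hR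

lemma myrel_of {n : ℕ} (hn : 7 ≤ n) {u v : ZMod n} (h : ACA n u.val v.val) : myrel n u v := by
  haveI : NeZero n := ⟨by omega⟩
  have hb := AC_bounds hn (ZMod.val_lt u) h
  exact ⟨(adj_iff' hn u v).mpr ⟨hb.2, AC_near hn (ZMod.val_lt u) h⟩, h⟩

lemma dep_of_path {n : ℕ} (hn : 7 ≤ n) {u v w : ZMod n}
    (h1 : ACA n u.val w.val) (h2 : ACA n w.val v.val) (h3 : ACA n u.val v.val) :
    (orient n hn).Dep u v := by
  haveI : NeZero n := ⟨by omega⟩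
  refine ⟨myrel_of hn h3, Relation.TransGen.head ⟨myrel_of hn h1, ?_⟩
    (Relation.TransGen.single ⟨myrel_of hn h2, ?_⟩)⟩
  · rintro ⟨-, hh⟩
    exact (AC_bounds hn (ZMod.val_lt w) h2).2 (congrArg ZMod.val hh)
  · rintro ⟨hh, -⟩
    exact (AC_bounds hn (ZMod.val_lt u) h1).2 (congrArg ZMod.val hh.symm)

lemma S_to_dep {n : ℕ} (hn : 7 ≤ n) {u v : ZMod n} (hS : SSA n u.val v.val) :
    (orient n hn).Dep u v := by
  haveI : NeZero n := ⟨by omega⟩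
  have hu := ZMod.val_lt u
  have hv := ZMod.val_lt v
  unfold SSA at hS
  split_ifs at hS with h0 h1 hpe
  · rcases hS with h2 | hlast
    · refine dep_of_path hn (w := ((1:ℕ) : ZMod n)) ?_ ?_ ?_ <;>
        · have hw : ((1:ℕ) : ZMod n).val = 1 := ZMod.val_cast_of_lt (by omega)
          unfold ACA; split_ifs <;> omega
    · refine dep_of_path hn (w := ((n-2:ℕ) : ZMod n)) ?_ ?_ ?_ <;>
        · have hw : ((n-2:ℕ) : ZMod n).val = n-2 := ZMod.val_cast_of_lt (by omega)
          unfold ACA; split_ifs <;> omega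
  · refine dep_of_path hn (w := ((2:ℕ) : ZMod n)) ?_ ?_ ?_ <;>
      · have hw : ((2:ℕ) : ZMod n).val = 2 := ZMod.val_cast_of_lt (by omega)
        unfold ACA; split_ifs <;> omega
  · rcases hS with ⟨h4, hle, hb⟩ | ⟨hodd, hn3, hb⟩
    · refine dep_of_path hn (w := ((u.val+1 : ℕ) : ZMod n)) ?_ ?_ ?_ <;>
        · have hw : ((u.val+1:ℕ) : ZMod n).val = u.val+1 := ZMod.val_cast_of_lt (by omega)
          unfold ACA; split_ifs <;> omega
    · refine dep_of_path hn (w := ((n-2:ℕ) : ZMod n)) ?_ ?_ ?_ <;>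
        · have hw : ((n-2:ℕ) : ZMod n).val = n-2 := ZMod.val_cast_of_lt (by omega)
          unfold ACA; split_ifs <;> omega

def FF (n : ℕ) : Finset (ZMod n × ZMod n) :=
  ((Finset.range (n / 2 - 2)).image fun j => (((2*j+4 : ℕ) : ZMod n), ((2*j+3 : ℕ) : ZMod n))) ∪
  {(((0:ℕ) : ZMod n), ((2:ℕ) : ZMod n)), (((0:ℕ) : ZMod n), ((n-1 : ℕ) : ZMod n)),
   (((1:ℕ) : ZMod n), ((3:ℕ) : ZMod n))} ∪
  (if n % 2 = 1 then {(((n-3 : ℕ) : ZMod n), ((n-1 : ℕ) : ZMod n))} else ∅)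

lemma eq_cast_iff {n x : ℕ} (hn : 7 ≤ n) (hx : x < n) (u : ZMod n) :
    u = ((x:ℕ) : ZMod n) ↔ u.val = x := by
  haveI : NeZero n := ⟨by omega⟩
  constructor
  · rintro rfl; exact ZMod.val_cast_of_lt hx
  · intro h
    apply ZMod.val_injective
    rw [ZMod.val_cast_of_lt hx]; exact h

lemma mem_FF {n : ℕ} (hn : 7 ≤ n) (p : ZMod n × ZMod n) :
    p ∈ FF n ↔ SSA n p.1.val p.2.val := by
  haveI : NeZero n := ⟨by omega⟩
  obtain ⟨u, v⟩ := p
  have hu := ZMod.val_lt u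
  have hv := ZMod.val_lt v
  simp only [FF, Finset.mem_union, Finset.mem_image, Finset.mem_range, Finset.mem_insert,
    Finset.mem_singleton, Prod.mk.injEq]
  constructor
  · rintro ((⟨j, hj, h1, h2⟩ | (⟨h1, h2⟩ | ⟨h1, h2⟩ | ⟨h1, h2⟩)) | hx)
    · have e1 := (eq_cast_iff hn (by omega) u).mp h1.symm
      have e2 := (eq_cast_iff hn (by omega) v).mp h2.symm
      unfold SSA; split_ifs <;> omega
    · have e1 := (eq_cast_iff hn (by omega) u).mp h1
      have e2 := (eq_cast_iff hn (by omega) v).mp h2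
      unfold SSA; split_ifs <;> omega
    · have e1 := (eq_cast_iff hn (by omega) u).mp h1
      have e2 := (eq_cast_iff hn (by omega) v).mp h2
      unfold SSA; split_ifs <;> omega
    · have e1 := (eq_cast_iff hn (by omega) u).mp h1
      have e2 := (eq_cast_iff hn (by omega) v).mp h2
      unfold SSA; split_ifs <;> omega
    · rcases Nat.mod_two_eq_zero_or_one n with hp | hp
      · rw [if_neg (by omega)] at hx; exact absurd hx (Finset.notMem_empty _)
      · rw [if_pos hp, Finset.mem_singleton, Prod.mk.injEq] at hx
        have e1 := (eq_cast_iff hn (by omega) u).mp hx.1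
        have e2 := (eq_cast_iff hn (by omega) v).mp hx.2
        unfold SSA; split_ifs <;> omega
  · intro hS
    unfold SSA at hS
    split_ifs at hS with h0 h1 hpe
    · rcases hS with h2 | h2
      · exact Or.inl (Or.inr (Or.inl ⟨(eq_cast_iff hn (by omega) u).mpr (by omega),
          (eq_cast_iff hn (by omega) v).mpr (by omega)⟩))
      · exact Or.inl (Or.inr (Or.inr (Or.inl ⟨(eq_cast_iff hn (by omega) u).mpr (by omega),
          (eq_cast_iff hn (by omega) v).mpr (by omega)⟩)))
    · exact Or.inl (Or.inr (Or.inr (Or.inr ⟨(eq_cast_iff hn (by omega) u).mpr (by omega),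
        (eq_cast_iff hn (by omega) v).mpr (by omega)⟩)))
    · rcases hS with ⟨h4, hle, hb⟩ | ⟨hodd, hn3, hb⟩
      · refine Or.inl (Or.inl ⟨(u.val - 4)/2, by omega, ?_, ?_⟩)
        · exact ((eq_cast_iff hn (by omega) u).mpr (by omega)).symm
        · exact ((eq_cast_iff hn (by omega) v).mpr (by omega)).symm
      · refine Or.inr ?_
        rw [if_pos (by omega), Finset.mem_singleton, Prod.mk.injEq]
        exact ⟨(eq_cast_iff hn (by omega) u).mpr (by omega),
               (eq_cast_iff hn (by omega) v).mpr (by omega)⟩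

lemma card_FF {n : ℕ} (hn : 7 ≤ n) : (FF n).card = (n + 1) / 2 + 1 := by
  haveI : NeZero n := ⟨by omega⟩
  have hcA : ((Finset.range (n / 2 - 2)).image
      fun j => (((2*j+4 : ℕ) : ZMod n), ((2*j+3 : ℕ) : ZMod n))).card = n / 2 - 2 := by
    rw [Finset.card_image_of_injOn, Finset.card_range]
    intro i hi j hj hij
    simp only [Finset.coe_range, Set.mem_Iio] at hi hj
    have h1 := congrArg (fun q : ZMod n × ZMod n => q.1.val) hij
    simp only [ZMod.val_cast_of_lt (show 2*i+4 < n by omega),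
      ZMod.val_cast_of_lt (show 2*j+4 < n by omega)] at h1
    omega
  have hcB : ({(((0:ℕ) : ZMod n), ((2:ℕ) : ZMod n)), (((0:ℕ) : ZMod n), ((n-1 : ℕ) : ZMod n)),
      (((1:ℕ) : ZMod n), ((3:ℕ) : ZMod n))} : Finset (ZMod n × ZMod n)).card = 3 := by
    rw [Finset.card_insert_of_notMem, Finset.card_insert_of_notMem, Finset.card_singleton]
    · rw [Finset.mem_singleton, Prod.mk.injEq]
      rintro ⟨g1, -⟩
      have h1 := congrArg ZMod.val g1
      simp only [ZMod.val_cast_of_lt (show 0 < n by omega),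
        ZMod.val_cast_of_lt (show 1 < n by omega)] at h1
      omega
    · simp only [Finset.mem_insert, Finset.mem_singleton, Prod.mk.injEq]
      rintro (⟨-, g2⟩ | ⟨-, g2⟩)
      · have h2 := congrArg ZMod.val g2
        simp only [ZMod.val_cast_of_lt (show 2 < n by omega),
          ZMod.val_cast_of_lt (show n-1 < n by omega)] at h2
        omega
      · have h2 := congrArg ZMod.val g2
        simp only [ZMod.val_cast_of_lt (show 2 < n by omega),
          ZMod.val_cast_of_lt (show 3 < n by omega)] at h2
        omega
  have hcC : ((if n % 2 = 1 then ({(((n-3 : ℕ) : ZMod n), ((n-1 : ℕ) : ZMod n))} :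
      Finset (ZMod n × ZMod n)) else ∅)).card = n % 2 := by
    rcases Nat.mod_two_eq_zero_or_one n with hp | hp
    · rw [if_neg (by omega), Finset.card_empty]; omega
    · rw [if_pos hp, Finset.card_singleton]; omega
  have hAB : Disjoint ((Finset.range (n / 2 - 2)).image
      fun j => (((2*j+4 : ℕ) : ZMod n), ((2*j+3 : ℕ) : ZMod n)))
      ({(((0:ℕ) : ZMod n), ((2:ℕ) : ZMod n)), (((0:ℕ) : ZMod n), ((n-1 : ℕ) : ZMod n)),
      (((1:ℕ) : ZMod n), ((3:ℕ) : ZMod n))} : Finset (ZMod n × ZMod n)) := by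
    rw [Finset.disjoint_left]
    rintro ⟨u, v⟩ hA hB
    simp only [Finset.mem_image, Finset.mem_range, Prod.mk.injEq] at hA
    obtain ⟨j, hj, h1, h2⟩ := hA
    have e1 := (eq_cast_iff hn (by omega) u).mp h1.symm
    simp only [Finset.mem_insert, Finset.mem_singleton, Prod.mk.injEq] at hB
    rcases hB with ⟨g1, -⟩ | ⟨g1, -⟩ | ⟨g1, -⟩ <;>
      · have f1 := (eq_cast_iff hn (by omega) u).mp g1
        omega
  have hABC : Disjoint (((Finset.range (n / 2 - 2)).image
      fun j => (((2*j+4 : ℕ) : ZMod n), ((2*j+3 : ℕ) : ZMod n))) ∪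
      ({(((0:ℕ) : ZMod n), ((2:ℕ) : ZMod n)), (((0:ℕ) : ZMod n), ((n-1 : ℕ) : ZMod n)),
      (((1:ℕ) : ZMod n), ((3:ℕ) : ZMod n))} : Finset (ZMod n × ZMod n)))
      ((if n % 2 = 1 then ({(((n-3 : ℕ) : ZMod n), ((n-1 : ℕ) : ZMod n))} :
      Finset (ZMod n × ZMod n)) else ∅)) := by
    rcases Nat.mod_two_eq_zero_or_one n with hp | hp
    · rw [if_neg (by omega)]
      exact Finset.disjoint_empty_right _
    · rw [if_pos hp, Finset.disjoint_right]
      rintro ⟨u, v⟩ hC hAB'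
      rw [Finset.mem_singleton, Prod.mk.injEq] at hC
      have e1 := (eq_cast_iff hn (by omega) u).mp hC.1
      have e2 := (eq_cast_iff hn (by omega) v).mp hC.2
      simp only [Finset.mem_union, Finset.mem_image, Finset.mem_range, Finset.mem_insert,
        Finset.mem_singleton, Prod.mk.injEq] at hAB'
      rcases hAB' with ⟨j, hj, h1, h2⟩ | (⟨g1, -⟩ | ⟨g1, -⟩ | ⟨g1, -⟩)
      · have f2 := (eq_cast_iff hn (by omega) v).mp h2.symm
        omega
      · have f1 := (eq_cast_iff hn (by omega) u).mp g1
        omega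
      · have f1 := (eq_cast_iff hn (by omega) u).mp g1
        omega
      · have f1 := (eq_cast_iff hn (by omega) u).mp g1
        omega
  rw [FF, Finset.card_union_of_disjoint hABC, Finset.card_union_of_disjoint hAB, hcA, hcB, hcC]
  omega

end CSq

/-- For `n ≥ 7`, there is an acyclic orientation of `C_n^2` with exactly
`⌈n/2⌉ + 1` dependent arcs. -/
theorem stmt9 (n : ℕ) (hn : 7 ≤ n) :
    ∃ D : GraphOrientation (cycleSq n), D.Acyclic ∧ depCount D = (n + 1) / 2 + 1 := by
  haveI : NeZero n := ⟨by omega⟩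
  refine ⟨CSq.orient n hn, CSq.orient_acyclic hn, ?_⟩
  have hset : (CSq.orient n hn).depArcs = ↑(CSq.FF n) := by
    ext p
    simp only [GraphOrientation.depArcs, Set.mem_setOf_eq, Finset.mem_coe]
    constructor
    · intro h
      exact (CSq.mem_FF hn p).mpr (CSq.dep_to_S hn h)
    · intro h
      exact CSq.S_to_dep hn ((CSq.mem_FF hn p).mp h)
  unfold depCount
  rw [hset, Set.ncard_coe_finset, CSq.card_FF hn]
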